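/- arXiv:2305.03248 — 10 statements merged into one kernel-verified Lean document; each statement's English description precedes it below -/
import Mathlib

section
/- The dominating number of the composition of two relational systems equals the product of the dominating numbers: 𝔡(R₀; R₁) = 𝔡(R₀) · 𝔡(R₁) (as cardinals, assuming both are infinite or using cardinal multiplication). -/
open Cardinal

/-- The dominating number of a relational system: the least cardinality of a dominating set. -/
noncomputable def domNum {X Y : Type u} (R : X → Y → Prop) : Cardinal.{u} :=
  sInf { c : Cardinal.{u} | ∃ D : Set Y, (∀ x : X, ∃ y ∈ D, R x y) ∧ #D = c }

lemma domNum_le_mk {X Y : Type u} (R : X → Y → Prop) (D : Set Y)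
    (hD : ∀ x : X, ∃ y ∈ D, R x y) : domNum R ≤ #D :=
  csInf_le (OrderBot.bddBelow _) ⟨D, hD, rfl⟩

lemma exists_min_dom {X Y : Type u} (R : X → Y → Prop) (D : Set Y)
    (hD : ∀ x : X, ∃ y ∈ D, R x y) :
    ∃ D' : Set Y, (∀ x : X, ∃ y ∈ D', R x y) ∧ #D' = domNum R := by
  have hne : Set.Nonempty { c : Cardinal.{u} | ∃ D' : Set Y, (∀ x : X, ∃ y ∈ D', R x y) ∧ #D' = c } :=
    ⟨#D, D, hD, rfl⟩
  exact csInf_mem hne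

lemma domNum_eq_zero_of_not_dom {X Y : Type u} (R : X → Y → Prop)
    (h : ¬ ∃ D : Set Y, ∀ x : X, ∃ y ∈ D, R x y) : domNum R = 0 := by
  have : { c : Cardinal.{u} | ∃ D : Set Y, (∀ x : X, ∃ y ∈ D, R x y) ∧ #D = c } = ∅ := by
    ext c
    simp only [Set.mem_setOf_eq, Set.mem_empty_iff_false, iff_false]
    rintro ⟨D, hD, -⟩
    exact h ⟨D, hD⟩
  rw [domNum, this, Cardinal.sInf_empty]

/-- 𝔡(R₀; R₁) = 𝔡(R₀) · 𝔡(R₁): the dominating number of the composition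
(R₀; R₁) = ⟨X₀ × X₁^{Y₀}, Y₀ × Y₁, ⊏*⟩ of two relational systems equals the
cardinal product of the dominating numbers. -/
theorem domNum_comp {X₀ Y₀ X₁ Y₁ : Type u}
    [Nonempty X₀] [Nonempty Y₀] [Nonempty X₁] [Nonempty Y₁]
    (R₀ : X₀ → Y₀ → Prop) (R₁ : X₁ → Y₁ → Prop) :
    domNum (fun (p : X₀ × (Y₀ → X₁)) (q : Y₀ × Y₁) => R₀ p.1 q.1 ∧ R₁ (p.2 q.1) q.2)
      = domNum R₀ * domNum R₁ := by
  set Rc : (X₀ × (Y₀ → X₁)) → (Y₀ × Y₁) → Prop :=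
    fun p q => R₀ p.1 q.1 ∧ R₁ (p.2 q.1) q.2 with hRc
  by_cases hdom : ∃ D : Set (Y₀ × Y₁), ∀ p : X₀ × (Y₀ → X₁), ∃ q ∈ D, Rc p q
  · obtain ⟨Dc, hDc⟩ := hdom
    -- R₀ is dominated
    have hdom0 : ∀ x : X₀, ∃ y ∈ Prod.fst '' Dc, R₀ x y := by
      intro x
      obtain ⟨⟨y₀, y₁⟩, hq, h0, -⟩ := hDc ⟨x, fun _ => Classical.arbitrary X₁⟩
      exact ⟨y₀, ⟨_, hq, rfl⟩, h0⟩
    -- R₁ is dominated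
    have hdom1 : ∀ x : X₁, ∃ y ∈ Prod.snd '' Dc, R₁ x y := by
      intro x
      obtain ⟨⟨y₀, y₁⟩, hq, -, h1⟩ := hDc ⟨Classical.arbitrary X₀, fun _ => x⟩
      exact ⟨y₁, ⟨_, hq, rfl⟩, h1⟩
    obtain ⟨D₀, hD₀, hD₀c⟩ := exists_min_dom R₀ _ hdom0
    obtain ⟨D₁, hD₁, hD₁c⟩ := exists_min_dom R₁ _ hdom1
    apply le_antisymm
    · -- upper bound: D₀ ×ˢ D₁ dominates Rc
      have hprod : ∀ p : X₀ × (Y₀ → X₁), ∃ q ∈ D₀ ×ˢ D₁, Rc p q := by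
        rintro ⟨x, f⟩
        obtain ⟨y₀, hy₀, h0⟩ := hD₀ x
        obtain ⟨y₁, hy₁, h1⟩ := hD₁ (f y₀)
        exact ⟨⟨y₀, y₁⟩, ⟨hy₀, hy₁⟩, h0, h1⟩
      calc domNum Rc ≤ #(D₀ ×ˢ D₁ : Set (Y₀ × Y₁)) := domNum_le_mk Rc _ hprod
        _ = #D₀ * #D₁ := by
            rw [Cardinal.mk_congr (Equiv.Set.prod D₀ D₁), Cardinal.mk_prod,
              Cardinal.lift_id, Cardinal.lift_id]
        _ = domNum R₀ * domNum R₁ := by rw [hD₀c, hD₁c]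
    · -- lower bound
      obtain ⟨D, hD, hDc'⟩ := exists_min_dom Rc _ hDc
      rw [← hDc']
      -- A : set of y₀ whose fiber dominates R₁
      set S : Y₀ → Set Y₁ := fun y₀ => {y₁ | (y₀, y₁) ∈ D} with hS
      set A : Set Y₀ := {y₀ | ∀ x₁ : X₁, ∃ y₁ ∈ S y₀, R₁ x₁ y₁} with hA
      -- A dominates R₀
      have hAdom : ∀ x : X₀, ∃ y ∈ A, R₀ x y := by
        intro x
        by_contra hcon
        push_neg at hcon
        -- for each y₀ with R₀ x y₀, there is a witness x₁ not dominated by S y₀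
        have : ∀ y₀ : Y₀, ∃ x₁ : X₁, R₀ x y₀ → ∀ y₁ ∈ S y₀, ¬ R₁ x₁ y₁ := by
          intro y₀
          by_cases h0 : R₀ x y₀
          · have := hcon y₀
            rw [hA] at this
            simp only [Set.mem_setOf_eq] at this
            have hny : ¬ ∀ x₁ : X₁, ∃ y₁ ∈ S y₀, R₁ x₁ y₁ := fun h => this h h0
            push_neg at hny
            obtain ⟨x₁, hx₁⟩ := hny
            exact ⟨x₁, fun _ y₁ hy₁ => hx₁ y₁ hy₁⟩
          · exact ⟨Classical.arbitrary X₁, fun h => absurd h h0⟩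
        choose f hf using this
        obtain ⟨⟨y₀, y₁⟩, hq, h0, h1⟩ := hD ⟨x, f⟩
        exact hf y₀ h0 y₁ hq h1
      have h₀le : domNum R₀ ≤ #A := domNum_le_mk R₀ A hAdom
      have h₁le : ∀ y₀ : A, domNum R₁ ≤ #(S y₀.1) := fun ⟨y₀, hy₀⟩ =>
        domNum_le_mk R₁ (S y₀) hy₀
      -- the sigma injects into D
      have hinj : #(Σ y₀ : A, S y₀.1) ≤ #D := by
        apply Cardinal.mk_le_of_injective
          (f := fun z : Σ y₀ : A, S y₀.1 => (⟨(z.1.1, z.2.1), z.2.2⟩ : D))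
        rintro ⟨⟨a, ha⟩, ⟨b, hb⟩⟩ ⟨⟨a', ha'⟩, ⟨b', hb'⟩⟩ h
        simp only [Subtype.mk.injEq, Prod.mk.injEq] at h
        obtain ⟨h1, h2⟩ := h
        subst h1; subst h2; rfl
      calc domNum R₀ * domNum R₁ ≤ #A * domNum R₁ :=
            mul_le_mul_left h₀le _
        _ = Cardinal.sum (fun _ : A => domNum R₁) := (Cardinal.sum_const' _ _).symm
        _ ≤ Cardinal.sum (fun y₀ : A => #(S y₀.1)) := Cardinal.sum_le_sum _ _ h₁le
        _ = #(Σ y₀ : A, S y₀.1) := (Cardinal.mk_sigma _).symm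
        _ ≤ #D := hinj
  · -- composition not dominated: both sides 0
    have hc0 : domNum Rc = 0 := domNum_eq_zero_of_not_dom Rc hdom
    have : ¬ ((∃ D : Set Y₀, ∀ x : X₀, ∃ y ∈ D, R₀ x y) ∧
              (∃ D : Set Y₁, ∀ x : X₁, ∃ y ∈ D, R₁ x y)) := by
      rintro ⟨⟨D₀, hD₀⟩, ⟨D₁, hD₁⟩⟩
      apply hdom
      refine ⟨D₀ ×ˢ D₁, ?_⟩
      rintro ⟨x, f⟩
      obtain ⟨y₀, hy₀, h0⟩ := hD₀ x
      obtain ⟨y₁, hy₁, h1⟩ := hD₁ (f y₀)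
      exact ⟨⟨y₀, y₁⟩, ⟨hy₀, hy₁⟩, h0, h1⟩
    rw [hc0]
    rcases not_and_or.mp this with h | h
    · rw [domNum_eq_zero_of_not_dom R₀ h, zero_mul]
    · rw [domNum_eq_zero_of_not_dom R₁ h, mul_zero]
end

section
/- Let C be a countable set and f : C → [0,1]. Then there exists a family ⟨K_i : i ∈ C⟩ of clopen subsets of Baire space ω^ω (with product measure Lb_ω, where μ_ω({k}) = 2^{-(k+1)}) such that Lb_ω(K_i) = f(i) for all i, and the family is probabilistically independent: for every finite F ⊆ C, Lb_ω(⋂_{i∈F} K_i) = ∏_{i∈F} Lb_ω(K_i). -/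
open MeasureTheory

noncomputable def mA (A : Set ℕ) : ENNReal :=
  ∑' k, A.indicator (fun k => (2 : ENNReal)⁻¹ ^ (k + 1)) k

lemma mA_univ : mA Set.univ = 1 := by
  simp only [mA, Set.indicator_univ]
  rw [show (fun k => (2:ENNReal)⁻¹ ^ (k+1)) = fun k => (2:ENNReal)⁻¹ ^ k * 2⁻¹ by
    funext k; rw [pow_succ]]
  rw [ENNReal.tsum_mul_right, ENNReal.tsum_geometric, ENNReal.one_sub_inv_two,
    inv_inv, ENNReal.mul_inv_cancel (by simp) (by simp)]

lemma tsum_pi_prod (N : ℕ) (h : ℕ → ℕ → ENNReal) :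
    ∑' s : Fin N → ℕ, ∏ j : Fin N, h (j : ℕ) (s j) = ∏ j : Fin N, ∑' k, h (j : ℕ) k := by
  induction N generalizing h with
  | zero =>
    simp only [Finset.univ_eq_empty, Finset.prod_empty]
    exact tsum_eq_single (fun i : Fin 0 => 0)
      (fun b hb => (hb (funext fun i => i.elim0)).elim)
  | succ N ih =>
    rw [← Equiv.tsum_eq (Fin.consEquiv (fun _ : Fin (N+1) => ℕ))]
    rw [ENNReal.tsum_prod']
    simp only [Fin.consEquiv_apply, Fin.prod_univ_succ, Fin.cons_zero, Fin.cons_succ]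
    have : ∀ a : ℕ, ∑' (b : Fin N → ℕ), h 0 a * ∏ j : Fin N, h (j.succ : ℕ) (b j)
        = h 0 a * ∑' (b : Fin N → ℕ), ∏ j : Fin N, h (j.succ : ℕ) (b j) := fun a =>
      ENNReal.tsum_mul_left
    simp only [Fin.val_zero, this]
    rw [ENNReal.tsum_mul_right]
    congr 1
    simpa using ih (fun j k => h (j+1) k)

lemma exists_mA (r : ℝ) (hr : r ∈ Set.Icc (0:ℝ) 1) :
    ∃ A : Set ℕ, mA A = ENNReal.ofReal r := by
  obtain ⟨h0, h1⟩ := hr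
  rcases eq_or_lt_of_le h1 with h1 | h1
  · exact ⟨Set.univ, by rw [mA_univ, h1, ENNReal.ofReal_one]⟩
  set w : ℕ → ℝ := fun k => (2:ℝ)⁻¹ ^ (k+1) with hw
  set b : ℕ → ℕ := fun n => ⌊r * 2 ^ n⌋₊ with hb
  set A : Set ℕ := {k | 2 * b k < b (k + 1)} with hA
  have hnonneg : ∀ n : ℕ, 0 ≤ r * 2 ^ n := fun n => mul_nonneg h0 (by positivity)
  have hfle : ∀ n, (b n : ℝ) ≤ r * 2 ^ n := fun n => Nat.floor_le (hnonneg n)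
  have hlow : ∀ k, 2 * b k ≤ b (k+1) := by
    intro k
    apply Nat.le_floor
    push_cast
    calc (2 : ℝ) * b k ≤ 2 * (r * 2 ^ k) := by linarith [hfle k]
      _ = r * 2 ^ (k+1) := by ring
  have hup : ∀ k, b (k+1) ≤ 2 * b k + 1 := by
    intro k
    have h2 : r * 2 ^ k < b k + 1 := Nat.lt_floor_add_one _
    have : b (k+1) < 2 * b k + 2 := by
      rw [hb]
      apply Nat.floor_lt (hnonneg _) |>.mpr
      push_cast
      calc r * 2 ^ (k+1) = 2 * (r * 2 ^ k) := by ring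
        _ < 2 * (b k + 1) := by linarith
        _ = 2 * b k + 2 := by ring
    omega
  have hS : ∀ n, ∑ k ∈ Finset.range n, A.indicator w k = (b n : ℝ) / 2 ^ n := by
    intro n
    induction n with
    | zero =>
      simp only [Finset.range_zero, Finset.sum_empty, pow_zero, Nat.cast_eq_zero]
      rw [hb]
      simp only [pow_zero, mul_one]
      rw [Nat.floor_eq_zero.mpr h1]
      simp
    | succ n ih =>
      rw [Finset.sum_range_succ, ih]
      by_cases hn : n ∈ A
      · rw [Set.indicator_of_mem hn]
        have hbn : b (n+1) = 2 * b n + 1 := le_antisymm (hup n) hn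
        rw [hbn, hw]
        push_cast
        field_simp
        have h2 : ((1:ℝ)/2)^n * 2^(n*2) = 2^n := by
          rw [show n*2 = n+n by ring, pow_add, ← mul_assoc, ← mul_pow]; norm_num
        linear_combination h2
      · rw [Set.indicator_of_notMem hn]
        have hbn : b (n+1) = 2 * b n := le_antisymm (by rw [hA, Set.mem_setOf_eq, not_lt] at hn; exact hn) (hlow n)
        rw [hbn]
        push_cast
        field_simp
        ring
  have hwnn : ∀ k, 0 ≤ A.indicator w k :=
    fun k => Set.indicator_nonneg (fun k _ => by positivity) k
  have htend : Filter.Tendsto (fun n => ∑ k ∈ Finset.range n, A.indicator w k)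
      Filter.atTop (nhds r) := by
    simp only [hS]
    have hlb : ∀ n, r - (2:ℝ)⁻¹ ^ n ≤ (b n : ℝ) / 2 ^ n := by
      intro n
      have h := Nat.sub_one_lt_floor (r * 2 ^ n)
      have hbn : r * 2 ^ n - 1 < (b n : ℝ) := h
      rw [le_div_iff₀ (by positivity : (0:ℝ) < 2 ^ n)]
      have h2 : ((2:ℝ)⁻¹)^n * 2^n = 1 := by
        rw [← mul_pow]; norm_num
      nlinarith [pow_pos (by norm_num : (0:ℝ) < 2) n]
    have hub : ∀ n, (b n : ℝ) / 2 ^ n ≤ r := by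
      intro n
      rw [div_le_iff₀ (by positivity)]
      exact hfle n
    refine tendsto_of_tendsto_of_tendsto_of_le_of_le ?_ tendsto_const_nhds hlb hub
    have : Filter.Tendsto (fun n : ℕ => (2:ℝ)⁻¹ ^ n) Filter.atTop (nhds 0) :=
      tendsto_pow_atTop_nhds_zero_of_lt_one (by norm_num) (by norm_num)
    simpa using tendsto_const_nhds.sub this
  have hsum : HasSum (A.indicator w) r :=
    (hasSum_iff_tendsto_nat_of_nonneg hwnn r).mpr htend
  refine ⟨A, ?_⟩
  have hcoe : ∀ k, A.indicator (fun k => (2 : ENNReal)⁻¹ ^ (k + 1)) k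
      = ENNReal.ofReal (A.indicator w k) := by
    intro k
    by_cases hk : k ∈ A
    · rw [Set.indicator_of_mem hk, Set.indicator_of_mem hk, hw]
      rw [ENNReal.ofReal_pow (by norm_num)]
      congr 1
      rw [ENNReal.ofReal_inv_of_pos (by norm_num)]
      norm_num
    · rw [Set.indicator_of_notMem hk, Set.indicator_of_notMem hk, ENNReal.ofReal_zero]
  rw [mA]
  simp only [hcoe]
  rw [← ENNReal.ofReal_tsum_of_nonneg hwnn hsum.summable, hsum.tsum_eq]

lemma meas_constrained (μ : Measure (ℕ → ℕ))
    (hμ : ∀ (k : ℕ) (s : Fin k → ℕ),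
      μ {x : ℕ → ℕ | ∀ i : Fin k, x i = s i} = ∏ i : Fin k, ((2 : ENNReal)⁻¹) ^ (s i + 1))
    (N : ℕ) (g : ℕ → Set ℕ) :
    μ {x : ℕ → ℕ | ∀ j : Fin N, x j ∈ g j} = ∏ j : Fin N, mA (g (j : ℕ)) := by
  classical
  set T : Set (Fin N → ℕ) := {s | ∀ j : Fin N, s j ∈ g (j : ℕ)} with hT
  have hset : {x : ℕ → ℕ | ∀ j : Fin N, x j ∈ g j}
      = ⋃ s : T, {x : ℕ → ℕ | ∀ j : Fin N, x j = s.1 j} := by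
    ext x
    simp only [Set.mem_setOf_eq, Set.mem_iUnion]
    constructor
    · intro hx
      exact ⟨⟨fun j => x j, fun j => hx j⟩, fun j => rfl⟩
    · rintro ⟨⟨s, hs⟩, hxs⟩ j
      rw [hxs j]; exact hs j
  have hdisj : Pairwise (Function.onFun Disjoint
      (fun s : T => {x : ℕ → ℕ | ∀ j : Fin N, x j = s.1 j})) := by
    rintro ⟨s, hs⟩ ⟨t, ht⟩ hst
    simp only [Function.onFun, Set.disjoint_left]
    intro x hx hx'
    exact hst (Subtype.ext (funext fun j => (hx j).symm.trans (hx' j)))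
  have hmeas : ∀ s : T, MeasurableSet {x : ℕ → ℕ | ∀ j : Fin N, x j = s.1 j} := by
    intro s
    have : {x : ℕ → ℕ | ∀ j : Fin N, x j = s.1 j}
        = ⋂ j : Fin N, (fun x : ℕ → ℕ => x (j : ℕ)) ⁻¹' {s.1 j} := by
      ext x; simp [Set.mem_iInter]
    rw [this]
    exact MeasurableSet.iInter fun j => (measurable_pi_apply _) (MeasurableSet.singleton _)
  rw [hset, measure_iUnion hdisj hmeas]
  simp only [hμ]
  rw [tsum_subtype T (fun s : Fin N → ℕ => ∏ i : Fin N, ((2:ENNReal)⁻¹) ^ (s i + 1))]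
  have hind : ∀ s : Fin N → ℕ, T.indicator (fun s => ∏ i : Fin N, ((2:ENNReal)⁻¹) ^ (s i + 1)) s
      = ∏ j : Fin N, (g (j:ℕ)).indicator (fun k => (2:ENNReal)⁻¹ ^ (k+1)) (s j) := by
    intro s
    by_cases hs : s ∈ T
    · rw [Set.indicator_of_mem hs]
      exact Finset.prod_congr rfl fun j _ =>
        (Set.indicator_of_mem (hs j) (fun k => (2:ENNReal)⁻¹ ^ (k+1))).symm
    · rw [Set.indicator_of_notMem hs]
      obtain ⟨j, hj⟩ : ∃ j : Fin N, s j ∉ g (j : ℕ) := by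
        by_contra h; push_neg at h; exact hs h
      exact (Finset.prod_eq_zero (Finset.mem_univ j)
        (by rw [Set.indicator_of_notMem hj])).symm
  simp only [hind]
  exact tsum_pi_prod N (fun j k => (g j).indicator (fun k => (2:ENNReal)⁻¹ ^ (k+1)) k)

/-- Let C be a countable set and f : C → [0,1]. For the product probability measure
Lb_ω on Baire space ω^ω (with coordinate measure μ_ω({k}) = 2^{-(k+1)}), there is a
family ⟨K_i : i ∈ C⟩ of clopen subsets of ω^ω with Lb_ω(K_i) = f(i) which is
probabilistically independent: Lb_ω(⋂_{i∈F} K_i) = ∏_{i∈F} Lb_ω(K_i) for every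
finite F ⊆ C. -/
theorem exists_independent_clopen_family {C : Type*} [Countable C]
    (μ : Measure (ℕ → ℕ)) [IsProbabilityMeasure μ]
    (hμ : ∀ (k : ℕ) (s : Fin k → ℕ),
      μ {x : ℕ → ℕ | ∀ i : Fin k, x i = s i} = ∏ i : Fin k, ((2 : ENNReal)⁻¹) ^ (s i + 1))
    (f : C → ℝ) (hf : ∀ i, f i ∈ Set.Icc (0 : ℝ) 1) :
    ∃ K : C → Set (ℕ → ℕ),
      (∀ i, IsClopen (K i)) ∧
      (∀ i, μ (K i) = ENNReal.ofReal (f i)) ∧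
      (∀ F : Finset C, μ (⋂ i ∈ F, K i) = ∏ i ∈ F, μ (K i)) := by
  classical
  obtain ⟨n, hn⟩ := exists_injective_nat C
  choose A hA using fun i => exists_mA (f i) (hf i)
  have hK : ∀ (m : ℕ) (B : Set ℕ), μ ((fun x : ℕ → ℕ => x m) ⁻¹' B) = mA B := by
    intro m B
    have key := meas_constrained μ hμ (m + 1)
      (fun j => if j = m then B else Set.univ)
    have hset : {x : ℕ → ℕ | ∀ j : Fin (m + 1),
        x j ∈ (if (j : ℕ) = m then B else Set.univ)}
        = (fun x : ℕ → ℕ => x m) ⁻¹' B := by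
      ext x
      simp only [Set.mem_setOf_eq, Set.mem_preimage]
      constructor
      · intro hx
        have := hx ⟨m, Nat.lt_succ_self _⟩
        simpa using this
      · intro hx j
        by_cases hj : (j : ℕ) = m
        · rw [if_pos hj, hj]; exact hx
        · rw [if_neg hj]; trivial
    rw [← hset, key]
    rw [Finset.prod_eq_single (⟨m, Nat.lt_succ_self _⟩ : Fin (m + 1))]
    · simp
    · intro j _ hj
      rw [if_neg, mA_univ]
      exact fun h => hj (Fin.ext h)
    · simp
  refine ⟨fun i => (fun x : ℕ → ℕ => x (n i)) ⁻¹' (A i), ?_, ?_, ?_⟩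
  · intro i
    exact (isClopen_discrete (A i)).preimage (continuous_apply (n i))
  · -- single measure
    intro i
    show μ ((fun x : ℕ → ℕ => x (n i)) ⁻¹' (A i)) = ENNReal.ofReal (f i)
    rw [hK, hA]
  · -- independence
    intro F
    set N := (F.sup fun i => n i) + 1 with hN
    set g : ℕ → Set ℕ := fun j => ⋂ i ∈ F.filter (fun i => n i = j), A i with hg
    have hgn : ∀ i ∈ F, g (n i) = A i := by
      intro i hi
      rw [hg]
      ext k
      simp only [Set.mem_iInter, Finset.mem_filter]
      constructor
      · intro h; exact h i ⟨hi, rfl⟩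
      · rintro h i' ⟨hi', he⟩
        rwa [hn he]
    have hgun : ∀ j, j ∉ F.image n → g j = Set.univ := by
      intro j hj
      rw [hg]
      have : F.filter (fun i => n i = j) = ∅ := by
        rw [Finset.filter_eq_empty_iff]
        intro i hi he
        exact hj (Finset.mem_image.mpr ⟨i, hi, he⟩)
      simp [this]
    have hset : (⋂ i ∈ F, (fun x : ℕ → ℕ => x (n i)) ⁻¹' (A i))
        = {x : ℕ → ℕ | ∀ j : Fin N, x j ∈ g j} := by
      ext x
      simp only [Set.mem_iInter, Set.mem_preimage, Set.mem_setOf_eq]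
      constructor
      · intro hx j
        rw [hg]
        simp only [Set.mem_iInter, Finset.mem_filter]
        rintro i ⟨hi, he⟩
        rw [← he]
        exact hx i hi
      · intro hx i hi
        have hlt : n i < N := Nat.lt_succ_of_le (Finset.le_sup hi)
        have := hx ⟨n i, hlt⟩
        rw [hgn i hi] at this
        exact this
    rw [hset, meas_constrained μ hμ N g]
    have h1 : ∏ j : Fin N, mA (g (j : ℕ)) = ∏ j ∈ Finset.range N, mA (g j) := by
      rw [Finset.prod_range fun j => mA (g j)]
    rw [h1]
    have hsub : F.image n ⊆ Finset.range N := by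
      intro j hj
      obtain ⟨i, hi, rfl⟩ := Finset.mem_image.mp hj
      exact Finset.mem_range.mpr (Nat.lt_succ_of_le (Finset.le_sup hi))
    rw [← Finset.prod_subset hsub (fun j _ hj => by rw [hgun j hj, mA_univ])]
    rw [Finset.prod_image (fun i hi i' hi' he => hn he)]
    refine Finset.prod_congr rfl fun i hi => ?_
    rw [hgn i hi]
    exact (hK (n i) (A i)).symm
end

section
/- Let b : ℕ → Set (each b(n) a nonempty countable set) and h, h⁺ : ℕ → ℕ. Suppose I = ⟨I_k : k < ω⟩ is an interval partition of ℕ such that h(i) ≥ h⁺(k) for all k and all i ∈ I_k, and define b⁺(k) := ∏_{i∈I_k} b(i). Then Lc(b,h) ≼_T Lc(b⁺,h⁺): there exist Ψ₋ : ∏b → ∏b⁺ and Ψ₊ : S(b⁺,h⁺) → S(b,h) such that Ψ₋(x) ∈* S implies x ∈* Ψ₊(S). -/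
open Filter

private lemma lc_aux_exists (e : ℕ → ℕ) (he0 : e 0 = 0) (hemono : StrictMono e) (n : ℕ) :
    ∃ k, e k ≤ n ∧ n < e (k + 1) := by
  have hex : ∃ m, n < e m := ⟨n + 1, lt_of_lt_of_le (Nat.lt_succ_self n) (hemono.le_apply)⟩
  classical
  let m := Nat.find hex
  have hm : n < e m := Nat.find_spec hex
  have hm0 : m ≠ 0 := by
    intro h0
    rw [h0, he0] at hm
    exact Nat.not_lt_zero n hm
  obtain ⟨k, hks⟩ := Nat.exists_eq_succ_of_ne_zero hm0
  rw [hks] at hm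
  refine ⟨k, ?_, hm⟩
  have := Nat.find_min hex (m := k) (by omega)
  omega

/-- Lc(b,h) ≼_T Lc(b⁺,h⁺): if I = ⟨I_k⟩ is an interval partition of ℕ (given by the
strictly increasing sequence of endpoints e with e 0 = 0, so I_k = [e k, e (k+1)))
with h(i) ≥ h⁺(k) for all i ∈ I_k, and b⁺(k) := ∏_{i∈I_k} b(i), then there is a
Tukey connection (Ψ₋, Ψ₊) from the localization system Lc(b,h) into Lc(b⁺,h⁺). -/
theorem lc_tukey_lc_pow {b : ℕ → Type*} [∀ n, Nonempty (b n)] [∀ n, Countable (b n)]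
    (h hp : ℕ → ℕ) (e : ℕ → ℕ) (he0 : e 0 = 0) (hemono : StrictMono e)
    (hh : ∀ k i, e k ≤ i → i < e (k + 1) → hp k ≤ h i) :
    ∃ (Ψm : (∀ n, b n) → (∀ k, (i : Set.Ico (e k) (e (k + 1))) → b i.1))
      (Ψp : {S : ∀ k, Finset ((i : Set.Ico (e k) (e (k + 1))) → b i.1) //
                ∀ k, (S k).card ≤ hp k} →
            {φ : ∀ n, Finset (b n) // ∀ n, (φ n).card ≤ h n}),
      ∀ x S, (∀ᶠ k in atTop, Ψm x k ∈ S.1 k) → (∀ᶠ n in atTop, x n ∈ (Ψp S).1 n) := by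
  classical
  -- the index function: k n is the unique k with n ∈ [e k, e (k+1))
  choose k hk1 hk2 using lc_aux_exists e he0 hemono
  refine ⟨fun x k i => x i.1, fun S => ⟨fun n => (S.1 (k n)).image (fun f => f ⟨n, hk1 n, hk2 n⟩),
    fun n => le_trans (Finset.card_image_le) (le_trans (S.2 (k n)) (hh (k n) n (hk1 n) (hk2 n)))⟩,
    ?_⟩
  intro x S hev
  rw [eventually_atTop] at hev ⊢
  obtain ⟨K, hK⟩ := hev
  refine ⟨e K, fun n hn => ?_⟩
  have hkK : K ≤ k n := by
    by_contra hc
    push_neg at hc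
    have : e (k n + 1) ≤ e K := hemono.monotone hc
    have := hk2 n
    omega
  exact Finset.mem_image.mpr ⟨_, hK (k n) hkK, rfl⟩
end

section
/- Let b be a sequence of nonempty sets, h⁺ : ℕ → ℕ with h⁺(n) ≥ 1 for all n, let I be the interval partition of ℕ with |I_n| = h⁺(n), and b⁺(n) := ∏_{k∈I_n} b(k). Then aLc(b⁺, h⁺) ≼_T Ed_b: there are maps F : S(b⁺,h⁺) → ∏b and G : ∏b → ∏b⁺ such that whenever G(y)(n) ∈ φ(n) for infinitely many n, then F(φ)(k) = y(k) for infinitely many k. -/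
open Filter

/-- aLc(b⁺,h⁺) ≼_T Ed_b: if h⁺ ≥ 1, I is the interval partition of ℕ with
|I_n| = h⁺(n) (endpoints e with e 0 = 0 and e (n+1) = e n + h⁺ n), and
b⁺(n) := ∏_{k∈I_n} b(k), then there are maps F : S(b⁺,h⁺) → ∏b and
G : ∏b → ∏b⁺ such that whenever G(y)(n) ∈ φ(n) for infinitely many n,
F(φ)(k) = y(k) for infinitely many k. -/
theorem alc_pow_tukey_ed {b : ℕ → Type*} [∀ n, Nonempty (b n)]
    (hp : ℕ → ℕ) (hhp : ∀ n, 1 ≤ hp n)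
    (e : ℕ → ℕ) (he0 : e 0 = 0) (hee : ∀ n, e (n + 1) = e n + hp n) :
    ∃ (F : {φ : ∀ n, Finset ((k : Set.Ico (e n) (e (n + 1))) → b k.1) //
              ∀ n, (φ n).card ≤ hp n} → (∀ k, b k))
      (G : (∀ k, b k) → (∀ n, (k : Set.Ico (e n) (e (n + 1))) → b k.1)),
      ∀ φ y, {n | G y n ∈ φ.1 n}.Infinite → {k | F φ k = y k}.Infinite := by
  classical
  have hmono : StrictMono e := strictMono_nat_of_lt_succ (fun n => by
    have := hhp n; rw [hee]; omega)
  have hge : ∀ n, n ≤ e n := by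
    intro n
    induction n with
    | zero => omega
    | succ n ih => have := hhp n; rw [hee]; omega
  have hex : ∀ k, ∃ n, k < e (n + 1) := fun k =>
    ⟨k, lt_of_lt_of_le (Nat.lt_succ_self k) (hge (k + 1))⟩
  set idx : ℕ → ℕ := fun k => Nat.find (hex k) with hidxdef
  have hidx : ∀ k, e (idx k) ≤ k ∧ k < e (idx k + 1) := by
    intro k
    refine ⟨?_, Nat.find_spec (hex k)⟩
    rcases Nat.eq_zero_or_pos (idx k) with h | h
    · rw [h, he0]; omega
    · have hm := Nat.find_min (hex k) (m := idx k - 1)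
        (Nat.pred_lt (Nat.pos_iff_ne_zero.mp h))
      push_neg at hm
      have hq : idx k - 1 + 1 = idx k := by omega
      rwa [hq] at hm
  have hidx_eq : ∀ k n, e n ≤ k → k < e (n + 1) → idx k = n := by
    intro k n h1 h2
    by_contra hne
    rcases lt_or_gt_of_ne hne with h | h
    · have : e (idx k + 1) ≤ e n := hmono.monotone (by omega)
      have := (hidx k).2; omega
    · have : e (n + 1) ≤ e (idx k) := hmono.monotone (by omega)
      have := (hidx k).1; omega
  refine ⟨fun φ k =>
    if h : k - e (idx k) < (φ.1 (idx k)).card then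
      ((φ.1 (idx k)).toList.get ⟨k - e (idx k), by rwa [Finset.length_toList]⟩)
        ⟨k, (hidx k).1, (hidx k).2⟩
    else Classical.arbitrary _,
    fun y n k => y k.1, ?_⟩
  intro φ y hinf
  set G : (∀ k, b k) → (∀ n, (k : Set.Ico (e n) (e (n + 1))) → b k.1) :=
    fun y n k => y k.1 with hGdef
  set i : ℕ → ℕ := fun n => (φ.1 n).toList.idxOf (G y n) with hidef
  have main : ∀ k m, idx k = m → ∀ (h : k - e m < (φ.1 m).card),
      ((φ.1 m).toList.get ⟨k - e m, by rwa [Finset.length_toList]⟩) = G y m →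
      (if h : k - e (idx k) < (φ.1 (idx k)).card then
        ((φ.1 (idx k)).toList.get ⟨k - e (idx k), by rwa [Finset.length_toList]⟩)
          ⟨k, (hidx k).1, (hidx k).2⟩
      else Classical.arbitrary _) = y k := by
    intro k m hm
    subst hm
    intro h hget
    rw [dif_pos h]
    rw [hget]
  have hbound : ∀ n, G y n ∈ φ.1 n → i n < hp n := by
    intro n hn
    have hmem : G y n ∈ (φ.1 n).toList := Finset.mem_toList.mpr hn
    have hlt : i n < (φ.1 n).toList.length := List.idxOf_lt_length_iff.mpr hmem
    have hcard : i n < (φ.1 n).card := by rwa [Finset.length_toList] at hlt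
    exact lt_of_lt_of_le hcard (φ.2 n)
  have hkey : ∀ n, G y n ∈ φ.1 n →
      (fun k => if h : k - e (idx k) < (φ.1 (idx k)).card then
        ((φ.1 (idx k)).toList.get ⟨k - e (idx k), by rwa [Finset.length_toList]⟩)
          ⟨k, (hidx k).1, (hidx k).2⟩
      else Classical.arbitrary _) (e n + i n) = y (e n + i n) := by
    intro n hn
    have hmem : G y n ∈ (φ.1 n).toList := Finset.mem_toList.mpr hn
    have hlt : i n < (φ.1 n).toList.length := List.idxOf_lt_length_iff.mpr hmem
    have hcard : i n < (φ.1 n).card := by rwa [Finset.length_toList] at hlt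
    have hhn : i n < hp n := hbound n hn
    have hk2 : e n + i n < e (n + 1) := by rw [hee]; omega
    have hik : idx (e n + i n) = n := hidx_eq _ _ (Nat.le_add_right _ _) hk2
    have h1 : e n + i n - e n < (φ.1 n).card := by
      rwa [Nat.add_sub_cancel_left]
    refine main (e n + i n) n hik h1 ?_
    have hfin : (⟨e n + i n - e n, by rwa [Finset.length_toList]⟩ :
        Fin (φ.1 n).toList.length) = ⟨i n, hlt⟩ :=
      Fin.ext (by simp [Nat.add_sub_cancel_left])
    rw [hfin]
    exact List.idxOf_get hlt
  have hsub : (fun n => e n + i n) '' {n | G y n ∈ φ.1 n} ⊆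
      {k | (fun k => if h : k - e (idx k) < (φ.1 (idx k)).card then
        ((φ.1 (idx k)).toList.get ⟨k - e (idx k), by rwa [Finset.length_toList]⟩)
          ⟨k, (hidx k).1, (hidx k).2⟩
      else Classical.arbitrary _) k = y k} := by
    rintro _ ⟨n, hn, rfl⟩
    exact hkey n hn
  have hinj : Set.InjOn (fun n => e n + i n) {n | G y n ∈ φ.1 n} := by
    intro n hn m hm hnm
    by_contra hne
    rcases lt_or_gt_of_ne hne with h | h
    · have h1 : e n + i n < e (n + 1) := by rw [hee]; have := hbound n hn; omega
      have h2 : e (n + 1) ≤ e m := hmono.monotone (by omega)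
      simp only at hnm; omega
    · have h1 : e m + i m < e (m + 1) := by rw [hee]; have := hbound m hm; omega
      have h2 : e (m + 1) ≤ e n := hmono.monotone (by omega)
      simp only at hnm; omega
  exact ((hinf.image hinj).mono hsub)
end

section
/- Let b, h : ℕ → ℕ with b(n) ≥ 1 and h(n) ≥ 1 for all n, and define d(n) := ⌈b(n)/h(n)⌉. Then Ed_d ≼_T aLc(b,h): there exist Ψ₋ : ∏d → S(b,h) and Ψ₊ : ∏b → ∏d such that for all x ∈ ∏d and y ∈ ∏b, if y(n) ∈ Ψ₋(x)(n) for only finitely many n, then Ψ₊(y)(n) = x(n) for only finitely many n. -/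
lemma ceil_div_mul_ge (b h : ℕ) (hh : 1 ≤ h) : b ≤ (b + h - 1) / h * h := by
  have h1 := Nat.div_add_mod (b + h - 1) h
  have h2 := Nat.mod_lt (b + h - 1) (hh : 0 < h)
  rw [mul_comm]
  omega

/-- Ed_d ≼_T aLc(b,h) where d(n) = ⌈b(n)/h(n)⌉: there are maps
Ψ₋ : ∏d → S(b,h) and Ψ₊ : ∏b → ∏d such that for all x ∈ ∏d and y ∈ ∏b, if
y(n) ∈ Ψ₋(x)(n) for only finitely many n, then Ψ₊(y)(n) = x(n) for only
finitely many n. -/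
theorem ed_tukey_alc (b h : ℕ → ℕ) (hb : ∀ n, 1 ≤ b n) (hh : ∀ n, 1 ≤ h n)
    (d : ℕ → ℕ) (hd : ∀ n, d n = (b n + h n - 1) / h n) :
    ∃ (Ψm : (∀ n, Fin (d n)) → {φ : ∀ n, Finset (Fin (b n)) // ∀ n, (φ n).card ≤ h n})
      (Ψp : (∀ n, Fin (b n)) → (∀ n, Fin (d n))),
      ∀ (x : ∀ n, Fin (d n)) (y : ∀ n, Fin (b n)),
        {n | y n ∈ (Ψm x).1 n}.Finite → {n | Ψp y n = x n}.Finite := by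
  have hdiv : ∀ n (k : Fin (b n)), (k : ℕ) / h n < d n := by
    intro n k
    rw [hd, Nat.div_lt_iff_lt_mul (hh n : 0 < h n)]
    exact lt_of_lt_of_le k.2 (ceil_div_mul_ge _ _ (hh n))
  refine ⟨fun x => ⟨fun n => Finset.univ.filter (fun k : Fin (b n) => (k : ℕ) / h n = x n),
    fun n => ?_⟩, fun y n => ⟨(y n : ℕ) / h n, hdiv n (y n)⟩, fun x y hfin => ?_⟩
  · have key := Finset.card_le_card_of_injOn
      (f := fun k : Fin (b n) => (⟨(k : ℕ) % h n, Nat.mod_lt _ (hh n)⟩ : Fin (h n)))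
      (s := Finset.univ.filter (fun k : Fin (b n) => (k : ℕ) / h n = x n))
      (t := Finset.univ) (fun k _ => Finset.mem_univ _) ?_
    · simpa using key
    · intro k1 h1 k2 h2 he
      simp only [Finset.coe_filter, Set.mem_setOf_eq, Finset.mem_univ, true_and] at h1 h2
      have hm : (k1 : ℕ) % h n = (k2 : ℕ) % h n := by
        simpa [Fin.ext_iff] using he
      have d1 := Nat.div_add_mod (k1 : ℕ) (h n)
      have d2 := Nat.div_add_mod (k2 : ℕ) (h n)
      rw [h1] at d1
      rw [h2] at d2
      apply Fin.ext
      omega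
  · apply hfin.subset
    intro n hn
    simp only [Set.mem_setOf_eq] at hn ⊢
    simp only [Finset.mem_filter, Finset.mem_univ, true_and]
    exact congrArg Fin.val hn
end

section
/- Let p(n) := 2^n and 0 < N < ω. Then the dominating number of the localization system Lc(p, N) equals the continuum: no family of fewer than 𝔠 slaloms φ ∈ ∏_n [2^n]^{≤N} suffices to localize (x ∈* φ) every x ∈ ∏_n 2^n. -/
open Cardinal Filter

namespace DLcAux

/-- The restriction of an infinite binary sequence to its first `n` bits. -/
def restrict (z : ℕ → Bool) (n : ℕ) : Fin n → Bool := fun i => z i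

lemma restrict_injective : Function.Injective (fun z : ℕ → Bool => restrict z) := by
  intro z w h
  funext m
  exact congrFun (congrFun h (m + 1)) ⟨m, Nat.lt_succ_self m⟩

lemma eventually_restrict_ne {z w : ℕ → Bool} (h : z ≠ w) :
    ∀ᶠ n in atTop, restrict z n ≠ restrict w n := by
  obtain ⟨m, hm⟩ := Function.ne_iff.1 h
  filter_upwards [eventually_ge_atTop (m + 1)] with n hn hE
  exact hm (congrFun hE ⟨m, hn⟩)

/-- A single slalom of width `N` localizes only finitely many branches `restrict z`. -/
lemma fiber_finite (N : ℕ) (φ : ∀ n, Finset (Fin n → Bool)) (hφ : ∀ n, (φ n).card ≤ N) :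
    {z : ℕ → Bool | ∀ᶠ n in atTop, restrict z n ∈ φ n}.Finite := by
  by_contra hinf
  replace hinf : {z : ℕ → Bool | ∀ᶠ n in atTop, restrict z n ∈ φ n}.Infinite := hinf
  set s := {z : ℕ → Bool | ∀ᶠ n in atTop, restrict z n ∈ φ n}
  let e := hinf.natEmbedding
  let g : Fin (N + 1) → ℕ → Bool := fun i => (e i).1
  have hginj : Function.Injective g := by
    intro i j hij
    exact Fin.val_injective (e.injective (Subtype.ext hij))
  have hmem : ∀ i : Fin (N + 1), ∀ᶠ n in atTop, restrict (g i) n ∈ φ n :=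
    fun i => (e i).2
  have hne : ∀ i j : Fin (N + 1), ∀ᶠ n in atTop,
      i ≠ j → restrict (g i) n ≠ restrict (g j) n := by
    intro i j
    by_cases hij : i = j
    · exact Eventually.of_forall fun n h => absurd hij h
    · filter_upwards [eventually_restrict_ne (fun h => hij (hginj h))] with n hn _
      exact hn
  have hcomb := (eventually_all.2 hmem).and
    (eventually_all.2 fun i => eventually_all.2 (hne i))
  obtain ⟨n, hn1, hn2⟩ := hcomb.exists
  have hinj : Function.Injective
      (fun i : Fin (N + 1) => (⟨restrict (g i) n, hn1 i⟩ : {y // y ∈ φ n})) := by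
    intro i j hij
    by_contra hij'
    exact hn2 i j hij' (Subtype.mk.injEq .. ▸ hij)
  have := Fintype.card_le_of_injective _ hinj
  simp only [Fintype.card_fin, Fintype.card_coe] at this
  have := hφ n
  omega

lemma lower_bound (N : ℕ)
    (S : Set {φ : ∀ n, Finset (Fin n → Bool) // ∀ n, (φ n).card ≤ N})
    (hS : ∀ x : ∀ n, Fin n → Bool, ∃ φ ∈ S, ∀ᶠ n in atTop, x n ∈ φ.1 n) :
    Cardinal.continuum ≤ #S := by
  -- choose a localizing slalom for each branch
  have hch : ∀ z : ℕ → Bool, ∃ φ : S, ∀ᶠ n in atTop, restrict z n ∈ φ.1.1 n := by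
    intro z
    obtain ⟨φ, hφS, hφ⟩ := hS (restrict z)
    exact ⟨⟨φ, hφS⟩, hφ⟩
  choose f hf using hch
  -- each fiber of f is finite, hence countable
  have hfib : ∀ φ : S, #{z : ℕ → Bool // f z = φ} ≤ Cardinal.aleph0 := by
    intro φ
    have hc : ({z : ℕ → Bool | f z = φ}).Countable := by
      refine Set.Finite.countable (Set.Finite.subset (fiber_finite N φ.1.1 φ.1.2) ?_)
      intro z hz
      have := hf z
      rwa [show f z = φ from hz] at this
    haveI : Countable {z : ℕ → Bool // f z = φ} := hc.to_subtype
    exact Cardinal.mk_le_aleph0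
  have hle : #(ℕ → Bool) ≤ #S * Cardinal.aleph0 := by
    calc #(ℕ → Bool) = #(Σ φ : S, {z : ℕ → Bool // f z = φ}) :=
          (Cardinal.mk_congr (Equiv.sigmaFiberEquiv f)).symm
    _ = Cardinal.sum (fun φ : S => #{z : ℕ → Bool // f z = φ}) := Cardinal.mk_sigma _
    _ ≤ Cardinal.sum (fun _ : S => Cardinal.aleph0) := Cardinal.sum_le_sum _ _ hfib
    _ = #S * Cardinal.aleph0 := Cardinal.sum_const' _ _
  have hc : Cardinal.continuum ≤ #S * Cardinal.aleph0 := by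
    rwa [show #(ℕ → Bool) = Cardinal.continuum by simp [Cardinal.mk_arrow]] at hle
  have hmax := hc.trans (Cardinal.mul_le_max _ _)
  by_contra hlt
  rw [not_le] at hlt
  have : max (max #S Cardinal.aleph0) Cardinal.aleph0 < Cardinal.continuum :=
    max_lt (max_lt hlt Cardinal.aleph0_lt_continuum) Cardinal.aleph0_lt_continuum
  exact absurd hmax (not_le.2 this)

lemma mk_pi_eq : #(∀ n, Fin n → Bool) = Cardinal.continuum := by
  apply le_antisymm
  · have hinj : Function.Injective
        (fun (x : ∀ n, Fin n → Bool) => (fun n m => if h : m < n then x n ⟨m, h⟩ else false :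
          ℕ → ℕ → Bool)) := by
      intro x y h
      funext n i
      have := congrFun (congrFun h n) i.1
      simpa [i.2] using this
    have := Cardinal.mk_le_of_injective hinj
    rwa [show #(ℕ → ℕ → Bool) = Cardinal.continuum by
      rw [Cardinal.mk_arrow]; simp [Cardinal.mk_arrow, ← Cardinal.power_mul]] at this
  · have := Cardinal.mk_le_of_injective restrict_injective
    rwa [show #(ℕ → Bool) = Cardinal.continuum by simp [Cardinal.mk_arrow]] at this

end DLcAux

/-- For p(n) = 2^n (identified with the set of binary sequences of length n) and
0 < N < ω, the dominating number 𝔡^Lc_{p,N} of the localization system Lc(p,N)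
equals the continuum: the least cardinality of a family S of slaloms
φ ∈ ∏_n [2^n]^{≤N} such that every x ∈ ∏_n 2^n is localized (x ∈* φ) by some
member of S is 𝔠. -/
theorem dLc_two_pow_eq_continuum (N : ℕ) (hN : 0 < N) :
    sInf { c : Cardinal |
      ∃ S : Set {φ : ∀ n, Finset (Fin n → Bool) // ∀ n, (φ n).card ≤ N},
        (∀ x : ∀ n, Fin n → Bool, ∃ φ ∈ S, ∀ᶠ n in atTop, x n ∈ φ.1 n) ∧ #S = c }
      = Cardinal.continuum := by
  -- the family of all singleton slaloms has size 𝔠 and localizes everything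
  have hFinj : Function.Injective
      (fun x : ∀ n, Fin n → Bool =>
        (⟨fun n => {x n}, fun n => by simp; omega⟩ :
          {φ : ∀ n, Finset (Fin n → Bool) // ∀ n, (φ n).card ≤ N})) := by
    intro x y h
    funext n
    have := congrFun (congrArg Subtype.val h) n
    simpa using this
  have hmem : Cardinal.continuum ∈ { c : Cardinal |
      ∃ S : Set {φ : ∀ n, Finset (Fin n → Bool) // ∀ n, (φ n).card ≤ N},
        (∀ x : ∀ n, Fin n → Bool, ∃ φ ∈ S, ∀ᶠ n in atTop, x n ∈ φ.1 n) ∧ #S = c } := by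
    refine ⟨Set.range (fun x : ∀ n, Fin n → Bool =>
        (⟨fun n => {x n}, fun n => by simp; omega⟩ :
          {φ : ∀ n, Finset (Fin n → Bool) // ∀ n, (φ n).card ≤ N})), ?_, ?_⟩
    · intro x
      exact ⟨_, Set.mem_range_self x, Eventually.of_forall fun n => by simp⟩
    · rw [Cardinal.mk_range_eq _ hFinj, DLcAux.mk_pi_eq]
  apply le_antisymm
  · exact csInf_le (OrderBot.bddBelow _) hmem
  · obtain ⟨S, hS, hcard⟩ := csInf_mem ⟨_, hmem⟩
    rw [← hcard]
    exact DLcAux.lower_bound N S hS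
end

section
/- Suppose Σ_n h(n)/b(n) < ∞ where b, h : ℕ → ℕ, b(n) ≥ 1. Then for every slalom φ ∈ S(b,h), the set {x ∈ ∏b : x(n) ∈ φ(n) for infinitely many n} has measure zero with respect to the product of the uniform measures on the b(n). Consequently C_N ≼_T aLc(b,h)⊥, i.e., cov(N) ≤ 𝔟^aLc_{b,h} and 𝔡^aLc_{b,h} ≤ non(N). -/
open MeasureTheory Cardinal Filter
open scoped ENNReal

lemma single_coord_bound (b : ℕ → ℕ) (hb : ∀ n, 1 ≤ b n)
    (μ : Measure (∀ n, Fin (b n)))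
    (hμ : ∀ (k : ℕ) (s : ∀ i : Fin k, Fin (b i)),
      μ {x : ∀ n, Fin (b n) | ∀ i : Fin k, x i = s i} = ∏ i : Fin k, ((b i : ENNReal))⁻¹)
    (n : ℕ) (v : Fin (b n)) :
    μ {x : ∀ m, Fin (b m) | x n = v} ≤ ((b n : ENNReal))⁻¹ := by
  classical
  set S : Finset (∀ i : Fin (n+1), Fin (b i)) :=
    Finset.univ.filter (fun s => s (Fin.last n) = v) with hS
  have hsub : {x : ∀ m, Fin (b m) | x n = v} ⊆
      ⋃ s ∈ S, {x : ∀ m, Fin (b m) | ∀ i : Fin (n+1), x i = s i} := by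
    intro x hx
    exact Set.mem_biUnion (show (fun i : Fin (n+1) => x i) ∈ S by
      simp only [hS, Finset.mem_filter, Finset.mem_univ, true_and]; exact hx)
      (fun i => rfl)
  have hcard : (S.card : ENNReal) = ∏ i : Fin n, (b (i.castSucc) : ENNReal) := by
    have e : {s : ∀ i : Fin (n+1), Fin (b i) // s (Fin.last n) = v} ≃
        (∀ i : Fin n, Fin (b (i.castSucc))) :=
      { toFun := fun s i => s.1 i.castSucc
        invFun := fun t => ⟨Fin.snoc t v, by simp⟩
        left_inv := fun s => Subtype.ext (funext fun i =>
          Fin.lastCases (by simp [s.2]) (fun j => by simp) i)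
        right_inv := fun t => funext fun i => by simp }
    have : S.card = Fintype.card {s : ∀ i : Fin (n+1), Fin (b i) // s (Fin.last n) = v} := by
      rw [Fintype.card_subtype]
    rw [this, Fintype.card_congr e, Fintype.card_pi]
    simp [Nat.cast_prod]
  calc μ {x : ∀ m, Fin (b m) | x n = v}
      ≤ ∑ s ∈ S, μ {x : ∀ m, Fin (b m) | ∀ i : Fin (n+1), x i = s i} :=
        le_trans (measure_mono hsub) (measure_biUnion_finset_le S _)
    _ = ∑ s ∈ S, ∏ i : Fin (n+1), ((b i : ENNReal))⁻¹ := by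
        exact Finset.sum_congr rfl fun s _ => hμ (n+1) s
    _ = (S.card : ENNReal) * ∏ i : Fin (n+1), ((b i : ENNReal))⁻¹ := by
        rw [Finset.sum_const, nsmul_eq_mul]
    _ = ((b n : ENNReal))⁻¹ := by
        rw [hcard, Fin.prod_univ_castSucc]
        simp only [Fin.val_last]
        rw [← mul_assoc, ← Finset.prod_mul_distrib]
        have hone : ∀ m : ℕ,
            ((b m : ENNReal)) * ((b m : ENNReal))⁻¹ = 1 := fun m =>
          ENNReal.mul_inv_cancel
            (Nat.cast_ne_zero.mpr (Nat.one_le_iff_ne_zero.mp (hb _)))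
            (ENNReal.natCast_ne_top _)
        simp [hone]

/-- Suppose Σ_n h(n)/b(n) < ∞ (b(n) ≥ 1, h(n) ≥ 1) and let μ = Lb_b be the product
of the uniform measures on {0,…,b(n)−1} on ∏b. Then:
(1) for every slalom φ ∈ S(b,h), the set {x ∈ ∏b : x(n) ∈ φ(n) for infinitely
many n} is μ-null; consequently C_N ≼_T aLc(b,h)⊥, in particular
(2) cov(N) ≤ 𝔟^aLc_{b,h} and (3) 𝔡^aLc_{b,h} ≤ non(N). -/
theorem alc_null_cov_non (b h : ℕ → ℕ) (hb : ∀ n, 1 ≤ b n) (hh : ∀ n, 1 ≤ h n)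
    (hsum : Summable (fun n => (h n : ℝ) / (b n : ℝ)))
    (μ : Measure (∀ n, Fin (b n))) [IsProbabilityMeasure μ]
    (hμ : ∀ (k : ℕ) (s : ∀ i : Fin k, Fin (b i)),
      μ {x : ∀ n, Fin (b n) | ∀ i : Fin k, x i = s i} = ∏ i : Fin k, ((b i : ENNReal))⁻¹) :
    (∀ φ : {φ : ∀ n, Finset (Fin (b n)) // ∀ n, (φ n).card ≤ h n},
        μ {x : ∀ n, Fin (b n) | {n | x n ∈ φ.1 n}.Infinite} = 0) ∧
    -- cov(N) ≤ 𝔟^aLc_{b,h}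
    sInf { c : Cardinal | ∃ F : Set (Set (∀ n, Fin (b n))),
        (∀ A ∈ F, μ A = 0) ∧ ⋃₀ F = Set.univ ∧ #F = c }
      ≤ sInf { c : Cardinal |
          ∃ Φ : Set {φ : ∀ n, Finset (Fin (b n)) // ∀ n, (φ n).card ≤ h n},
            (¬ ∃ y : ∀ n, Fin (b n), ∀ φ ∈ Φ, {n | y n ∈ φ.1 n}.Finite) ∧ #Φ = c } ∧
    -- 𝔡^aLc_{b,h} ≤ non(N)
    sInf { c : Cardinal | ∃ D : Set (∀ n, Fin (b n)),
        (∀ φ : {φ : ∀ n, Finset (Fin (b n)) // ∀ n, (φ n).card ≤ h n},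
          ∃ y ∈ D, {n | y n ∈ φ.1 n}.Finite) ∧ #D = c }
      ≤ sInf { c : Cardinal | ∃ A : Set (∀ n, Fin (b n)), μ A ≠ 0 ∧ #A = c } := by
  classical
  -- Part (1)
  have part1 : ∀ φ : {φ : ∀ n, Finset (Fin (b n)) // ∀ n, (φ n).card ≤ h n},
      μ {x : ∀ n, Fin (b n) | {n | x n ∈ φ.1 n}.Infinite} = 0 := by
    intro φ
    set E : ℕ → Set (∀ n, Fin (b n)) := fun n => {x | x n ∈ φ.1 n} with hE
    have hEn : ∀ n, μ (E n) ≤ (h n : ENNReal) * ((b n : ENNReal))⁻¹ := by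
      intro n
      have hsub : E n ⊆ ⋃ v ∈ φ.1 n, {x : ∀ m, Fin (b m) | x n = v} := by
        intro x hx; exact Set.mem_biUnion hx rfl
      calc μ (E n) ≤ ∑ v ∈ φ.1 n, μ {x : ∀ m, Fin (b m) | x n = v} :=
            le_trans (measure_mono hsub) (measure_biUnion_finset_le _ _)
        _ ≤ ∑ _v ∈ φ.1 n, ((b n : ENNReal))⁻¹ :=
            Finset.sum_le_sum fun v _ => single_coord_bound b hb μ hμ n v
        _ = ((φ.1 n).card : ENNReal) * ((b n : ENNReal))⁻¹ := by
            rw [Finset.sum_const, nsmul_eq_mul]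
        _ ≤ (h n : ENNReal) * ((b n : ENNReal))⁻¹ := by
            gcongr; exact_mod_cast φ.2 n
    have hfin : (∑' n, μ (E n)) ≠ ∞ := by
      have h1 : (∑' n, μ (E n)) ≤ ∑' n, ENNReal.ofReal ((h n : ℝ) / (b n : ℝ)) := by
        apply ENNReal.tsum_le_tsum
        intro n
        refine le_trans (hEn n) (le_of_eq ?_)
        rw [ENNReal.ofReal_div_of_pos (by exact_mod_cast hb n)]
        rw [ENNReal.ofReal_natCast, ENNReal.ofReal_natCast, div_eq_mul_inv]
      have h2 : (∑' n, ENNReal.ofReal ((h n : ℝ) / (b n : ℝ))) ≠ ∞ := by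
        rw [← ENNReal.ofReal_tsum_of_nonneg (fun n => by positivity) hsum]
        exact ENNReal.ofReal_ne_top
      exact fun hc => h2 (top_le_iff.mp (hc ▸ h1))
    have hset : {x : ∀ n, Fin (b n) | {n | x n ∈ φ.1 n}.Infinite} = limsup E atTop := by
      ext x
      rw [Filter.mem_limsup_iff_frequently_mem]
      exact (Nat.frequently_atTop_iff_infinite (p := fun n => x n ∈ φ.1 n)).symm
    rw [hset]
    exact measure_limsup_atTop_eq_zero hfin
  refine ⟨part1, ?_, ?_⟩
  · -- cov ≤ 𝔟
    refine le_csInf ?_ ?_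
    · refine ⟨_, Set.univ, ?_, rfl⟩
      rintro ⟨y, hy⟩
      have := hy ⟨fun n => {y n}, fun n => by simpa using hh n⟩ (Set.mem_univ _)
      simp only [Finset.mem_singleton] at this
      exact Set.infinite_univ (by simpa using this)
    · rintro c ⟨Φ, hΦ, rfl⟩
      push_neg at hΦ
      set N : {φ : ∀ n, Finset (Fin (b n)) // ∀ n, (φ n).card ≤ h n} →
          Set (∀ n, Fin (b n)) := fun φ => {x | {n | x n ∈ φ.1 n}.Infinite} with hN
      refine le_trans (csInf_le (OrderBot.bddBelow _) ?_) (Cardinal.mk_image_le (f := N) (s := Φ))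
      refine ⟨N '' Φ, ?_, ?_, rfl⟩
      · rintro A ⟨φ, _, rfl⟩; exact part1 φ
      · apply Set.eq_univ_of_forall
        intro x
        obtain ⟨φ, hφΦ, hφ⟩ := hΦ x
        exact ⟨N φ, ⟨φ, hφΦ, rfl⟩, hφ⟩
  · -- 𝔡 ≤ non
    refine le_csInf ?_ ?_
    · exact ⟨_, Set.univ, by simp [measure_univ], rfl⟩
    · rintro c ⟨A, hA, rfl⟩
      refine csInf_le (OrderBot.bddBelow _) ⟨A, ?_, rfl⟩
      intro φ
      by_contra hcon
      push_neg at hcon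
      apply hA
      refine measure_mono_null ?_ (part1 φ)
      intro y hy
      exact hcon y hy
end

section
/- Every F_σ measure-zero set C ⊆ 2^ω is contained in a set of the form H_{b̃,φ} := {x ∈ 2^ω : ∀^∞ n, x↾[b̃(n), b̃(n+1)) ∈ φ(n)} for some strictly increasing b̃ : ℕ → ℕ with b̃(0) = 0 and some φ with φ(n) ⊆ 2^{[b̃(n), b̃(n+1))} satisfying |φ(n)|/2^{b̃(n+1)−b̃(n)} ≤ 2^{−n} for all n. -/
open MeasureTheory Filter Topology

namespace FsigmaAux

/-- The cylinder determined by a finite binary string. -/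
def cyl {m : ℕ} (s : Fin m → Bool) : Set (ℕ → Bool) := {x | ∀ i : Fin m, x i = s i}

open Classical in
/-- The set of length-`m` prefixes of elements of `K`. -/
noncomputable def pref (K : Set (ℕ → Bool)) (m : ℕ) : Finset (Fin m → Bool) :=
  Finset.univ.filter (fun s => ∃ x ∈ K, ∀ i : Fin m, x i = s i)

/-- Union of the cylinders of the length-`m` prefixes of `K`. -/
def U (K : Set (ℕ → Bool)) (m : ℕ) : Set (ℕ → Bool) := ⋃ s ∈ pref K m, cyl s

lemma measurable_cyl {m : ℕ} (s : Fin m → Bool) : MeasurableSet (cyl s) := by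
  have h : cyl s = ⋂ i : Fin m, (fun x : ℕ → Bool => x (i : ℕ)) ⁻¹' {s i} := by
    ext x; simp [cyl]
  rw [h]
  exact MeasurableSet.iInter fun i => (measurable_pi_apply _) (measurableSet_singleton _)

lemma measurable_U (K : Set (ℕ → Bool)) (m : ℕ) : MeasurableSet (U K m) :=
  (pref K m).measurableSet_biUnion fun s _ => measurable_cyl s

lemma mem_U {K : Set (ℕ → Bool)} {m : ℕ} {x : ℕ → Bool} :
    x ∈ U K m ↔ ∃ y ∈ K, ∀ i : Fin m, y (i : ℕ) = x (i : ℕ) := by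
  constructor
  · rintro hx
    simp only [U, Set.mem_iUnion] at hx
    obtain ⟨s, hs, hxs⟩ := hx
    simp only [pref, Finset.mem_filter] at hs
    obtain ⟨-, y, hyK, hys⟩ := hs
    exact ⟨y, hyK, fun i => (hys i).trans (hxs i).symm⟩
  · rintro ⟨y, hyK, hyx⟩
    simp only [U, Set.mem_iUnion]
    refine ⟨fun i => x (i : ℕ), ?_, fun i => rfl⟩
    simp only [pref, Finset.mem_filter]
    exact ⟨Finset.mem_univ _, y, hyK, hyx⟩

lemma subset_U (K : Set (ℕ → Bool)) (m : ℕ) : K ⊆ U K m :=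
  fun x hx => mem_U.2 ⟨x, hx, fun _ => rfl⟩

lemma U_antitone (K : Set (ℕ → Bool)) : Antitone (U K) := by
  intro m m' h x hx
  obtain ⟨y, hyK, hyx⟩ := mem_U.1 hx
  exact mem_U.2 ⟨y, hyK, fun i => hyx ⟨i, lt_of_lt_of_le i.isLt h⟩⟩

lemma iInter_U {K : Set (ℕ → Bool)} (hK : IsClosed K) : (⋂ m, U K m) = K := by
  apply subset_antisymm
  · intro x hx
    simp only [Set.mem_iInter] at hx
    have h : ∀ m, ∃ y, y ∈ K ∧ ∀ i : Fin m, y (i : ℕ) = x (i : ℕ) := by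
      intro m
      obtain ⟨y, h1, h2⟩ := mem_U.1 (hx m)
      exact ⟨y, h1, h2⟩
    choose y hyK hyx using h
    have ht : Tendsto y atTop (𝓝 x) := by
      rw [tendsto_pi_nhds]
      intro i
      refine tendsto_const_nhds.congr' ?_
      filter_upwards [eventually_gt_atTop i] with m hm
      exact (hyx m ⟨i, hm⟩).symm
    exact hK.mem_of_tendsto ht (Eventually.of_forall hyK)
  · exact fun x hx => Set.mem_iInter.2 fun m => subset_U K m hx

variable (μ : Measure (ℕ → Bool))

lemma measure_U
    (hμ : ∀ (n : ℕ) (s : Fin n → Bool),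
      μ {x : ℕ → Bool | ∀ i : Fin n, x i = s i} = ((2 : ENNReal))⁻¹ ^ n)
    (K : Set (ℕ → Bool)) (m : ℕ) :
    μ (U K m) = (pref K m).card * (2 : ENNReal)⁻¹ ^ m := by
  have hd : ((pref K m : Set (Fin m → Bool))).PairwiseDisjoint (cyl (m := m)) := by
    intro s _ t _ hst
    rw [Function.onFun, Set.disjoint_left]
    intro x hxs hxt
    exact hst (funext fun i => (hxs i).symm.trans (hxt i))
  rw [U, measure_biUnion_finset hd (fun s _ => measurable_cyl s)]
  have : ∀ s : Fin m → Bool, μ (cyl s) = (2 : ENNReal)⁻¹ ^ m := fun s => hμ m s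
  simp [this, Finset.sum_const, nsmul_eq_mul]

lemma key [IsProbabilityMeasure μ]
    (hμ : ∀ (n : ℕ) (s : Fin n → Bool),
      μ {x : ℕ → Bool | ∀ i : Fin n, x i = s i} = ((2 : ENNReal))⁻¹ ^ n)
    (K : Set (ℕ → Bool)) (hK : IsClosed K) (hK0 : μ K = 0) (N : ℕ) :
    ∃ m, N < m ∧ (pref K m).card * 2 ^ N ≤ 2 ^ m := by
  have htend : Tendsto (fun m => μ (U K m)) atTop (𝓝 0) := by
    have h := tendsto_measure_iInter_atTop (μ := μ)
      (fun m => (measurable_U K m).nullMeasurableSet) (U_antitone K)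
      ⟨0, measure_ne_top μ _⟩
    rwa [iInter_U hK, hK0] at h
  have hpos : (0 : ENNReal) < (2 : ENNReal)⁻¹ ^ N :=
    zero_lt_iff.mpr (pow_ne_zero N (ENNReal.inv_ne_zero.2 (by norm_num)))
  have hev : ∀ᶠ m in atTop, μ (U K m) < (2 : ENNReal)⁻¹ ^ N :=
    htend.eventually_lt_const hpos
  obtain ⟨m₀, hm₀⟩ := eventually_atTop.1 hev
  refine ⟨max m₀ (N + 1), lt_of_lt_of_le (Nat.lt_succ_self N) (le_max_right _ _), ?_⟩
  set m := max m₀ (N + 1) with hm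
  have hNm : N < m := lt_of_lt_of_le (Nat.lt_succ_self N) (le_max_right _ _)
  have hlt : ((pref K m).card : ENNReal) * (2 : ENNReal)⁻¹ ^ m < (2 : ENNReal)⁻¹ ^ N := by
    rw [← measure_U μ hμ K m]
    exact hm₀ m (le_max_left _ _)
  have hne : ((2 : ENNReal))⁻¹ ^ N ≠ 0 := hpos.ne'
  have hnt : ((2 : ENNReal))⁻¹ ^ N ≠ ⊤ := by
    refine (ENNReal.pow_lt_top ?_).ne
    exact ENNReal.inv_lt_top.2 (by norm_num)
  have step1 : ((pref K m).card : ENNReal) * (2 : ENNReal)⁻¹ ^ (m - N) < 1 := by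
    rw [← ENNReal.mul_lt_mul_iff_left hne hnt, one_mul]
    calc ((pref K m).card : ENNReal) * (2 : ENNReal)⁻¹ ^ (m - N) * (2 : ENNReal)⁻¹ ^ N
        = ((pref K m).card : ENNReal) * (2 : ENNReal)⁻¹ ^ m := by
          rw [mul_assoc, ← pow_add]
          congr 2
          omega
      _ < (2 : ENNReal)⁻¹ ^ N := hlt
  have step2 : ((pref K m).card : ENNReal) < 2 ^ (m - N) := by
    have h2 : ((2 : ENNReal))⁻¹ ^ (m - N) = ((2 : ENNReal) ^ (m - N))⁻¹ :=
      ENNReal.inv_pow.symm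
    rw [h2, ← div_eq_mul_inv] at step1
    rw [ENNReal.div_lt_iff (Or.inl (by positivity)) (Or.inl (by
      exact (ENNReal.pow_lt_top (by norm_num)).ne)), one_mul] at step1
    exact step1
  have step3 : (pref K m).card < 2 ^ (m - N) := by
    have := step2
    rw [show ((2 : ENNReal) ^ (m - N)) = ((2 ^ (m - N) : ℕ) : ENNReal) by push_cast; ring] at this
    exact_mod_cast this
  calc (pref K m).card * 2 ^ N ≤ 2 ^ (m - N) * 2 ^ N := by
        exact Nat.mul_le_mul_right _ (Nat.le_of_lt step3)
    _ = 2 ^ m := by rw [← pow_add]; congr 1; omega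

end FsigmaAux

open FsigmaAux

/-- Every F_σ measure-zero set C ⊆ 2^ω is contained in a set of the form
H_{b̃,φ} = {x : ∀^∞ n, x↾[b̃(n), b̃(n+1)) ∈ φ(n)} for some strictly increasing
b̃ with b̃(0) = 0 and some φ with φ(n) a set of binary sequences of length
b̃(n+1)−b̃(n) satisfying |φ(n)|/2^{b̃(n+1)−b̃(n)} ≤ 2^{−n} for all n. -/
theorem Fsigma_null_subset_H (μ : Measure (ℕ → Bool)) [IsProbabilityMeasure μ]
    (hμ : ∀ (n : ℕ) (s : Fin n → Bool),
      μ {x : ℕ → Bool | ∀ i : Fin n, x i = s i} = ((2 : ENNReal))⁻¹ ^ n)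
    (C : Set (ℕ → Bool))
    (hC : ∃ F : ℕ → Set (ℕ → Bool), (∀ n, IsClosed (F n)) ∧ C = ⋃ n, F n)
    (hC0 : μ C = 0) :
    ∃ (bt : ℕ → ℕ), StrictMono bt ∧ bt 0 = 0 ∧
      ∃ φ : ∀ n, Finset (Fin (bt (n + 1) - bt n) → Bool),
        (∀ n, ((φ n).card : ℝ) / 2 ^ (bt (n + 1) - bt n) ≤ 1 / 2 ^ n) ∧
        C ⊆ {x : ℕ → Bool | ∀ᶠ n in atTop,
              (fun i : Fin (bt (n + 1) - bt n) => x (bt n + i)) ∈ φ n} := by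
  classical
  obtain ⟨F, hFc, hCF⟩ := hC
  set G : ℕ → Set (ℕ → Bool) := fun n => ⋃ k ∈ Finset.range (n + 1), F k with hG
  have hGc : ∀ n, IsClosed (G n) := fun n =>
    isClosed_biUnion_finset fun k _ => hFc k
  have hGsub : ∀ n, G n ⊆ C := by
    intro n x hx
    simp only [hG, Set.mem_iUnion] at hx
    obtain ⟨k, _, hk⟩ := hx
    rw [hCF]
    exact Set.mem_iUnion.2 ⟨k, hk⟩
  have hG0 : ∀ n, μ (G n) = 0 := fun n => measure_mono_null (hGsub n) hC0
  have keyn : ∀ n N, ∃ m, N < m ∧ (pref (G n) m).card * 2 ^ N ≤ 2 ^ m :=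
    fun n N => key μ hμ (G n) (hGc n) (hG0 n) N
  -- construct bt recursively
  let b : ℕ → ℕ := fun n => Nat.rec 0 (fun k bk => (keyn k (bk + k)).choose) n
  have hb0 : b 0 = 0 := rfl
  have hbsucc : ∀ n, b (n + 1) = (keyn n (b n + n)).choose := fun n => rfl
  have hb1 : ∀ n, b n + n < b (n + 1) := fun n => (keyn n (b n + n)).choose_spec.1
  have hb2 : ∀ n, (pref (G n) (b (n + 1))).card * 2 ^ (b n + n) ≤ 2 ^ (b (n + 1)) :=
    fun n => (keyn n (b n + n)).choose_spec.2
  clear_value b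
  have hbmono : StrictMono b :=
    strictMono_nat_of_lt_succ fun n => lt_of_le_of_lt (Nat.le_add_right _ n) (hb1 n)
  refine ⟨b, hbmono, hb0, ?_⟩
  have hlt : ∀ n (i : Fin (b (n + 1) - b n)), b n + (i : ℕ) < b (n + 1) := by
    intro n i
    have := i.isLt
    have := hb1 n
    omega
  refine ⟨fun n => (pref (G n) (b (n + 1))).image
    (fun s => fun i : Fin (b (n + 1) - b n) => s ⟨b n + (i : ℕ), hlt n i⟩), ?_, ?_⟩
  · intro n
    set d := b (n + 1) - b n with hd
    have hcard : ((pref (G n) (b (n + 1))).image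
        (fun s => fun i : Fin d => s ⟨b n + (i : ℕ), hlt n i⟩)).card
        ≤ (pref (G n) (b (n + 1))).card := Finset.card_image_le
    -- nat inequality: cardφ * 2^n ≤ 2^d
    have hnat : ((pref (G n) (b (n + 1))).image
        (fun s => fun i : Fin d => s ⟨b n + (i : ℕ), hlt n i⟩)).card * 2 ^ n ≤ 2 ^ d := by
      have h1 : (pref (G n) (b (n + 1))).card * 2 ^ (b n + n) ≤ 2 ^ (b (n + 1)) := hb2 n
      have h2 : 2 ^ (b (n + 1)) = 2 ^ d * 2 ^ (b n) := by
        rw [← pow_add, hd, Nat.sub_add_cancel (le_of_lt (lt_of_le_of_lt (Nat.le_add_right _ n) (hb1 n)))]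
      have h3 : (pref (G n) (b (n + 1))).card * 2 ^ n * 2 ^ (b n) ≤ 2 ^ d * 2 ^ (b n) := by
        calc (pref (G n) (b (n + 1))).card * 2 ^ n * 2 ^ (b n)
            = (pref (G n) (b (n + 1))).card * 2 ^ (b n + n) := by ring
          _ ≤ 2 ^ (b (n + 1)) := h1
          _ = 2 ^ d * 2 ^ (b n) := h2
      have h4 : (pref (G n) (b (n + 1))).card * 2 ^ n ≤ 2 ^ d :=
        Nat.le_of_mul_le_mul_right h3 (Nat.pow_pos (by norm_num))
      exact le_trans (Nat.mul_le_mul_right _ hcard) h4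
    rw [div_le_div_iff₀ (by positivity) (by positivity)]
    calc (((pref (G n) (b (n + 1))).image
          (fun s => fun i : Fin d => s ⟨b n + (i : ℕ), hlt n i⟩)).card : ℝ) * 2 ^ n
        ≤ (2 : ℝ) ^ d := by exact_mod_cast hnat
      _ = 1 * 2 ^ d := (one_mul _).symm
  · intro x hx
    rw [hCF] at hx
    obtain ⟨k, hk⟩ := Set.mem_iUnion.1 hx
    simp only [Set.mem_setOf_eq]
    filter_upwards [eventually_ge_atTop k] with n hn
    have hxG : x ∈ G n := by
      simp only [hG, Set.mem_iUnion]
      exact ⟨k, Finset.mem_range.2 (by omega), hk⟩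
    have hs : (fun j : Fin (b (n + 1)) => x (j : ℕ)) ∈ pref (G n) (b (n + 1)) := by
      simp only [pref, Finset.mem_filter]
      exact ⟨Finset.mem_univ _, x, hxG, fun i => rfl⟩
    exact Finset.mem_image.2 ⟨_, hs, rfl⟩
end

section
/- Let 𝐭 = (L, φ, φ') be a 2-small coding with associated intervals I_k = [n_k, n_{k+1}) and I'_k = [m_k, m_{k+1}). Define S_k := {s ∈ 2^{[n_k,m_k)} : s has at least 2^{n_{k+1}−m_k−k} extensions inside φ(k)}. Then |S_k|/2^{m_k − n_k} < 1/2^{k+2} for all k. -/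
/-- Let 𝐭 = (L, φ, φ') be a 2-small coding: L is the interval partition of ℕ with
L_{2k} = [n_k, m_k), L_{2k+1} = [m_k, n_{k+1}) (so n_0 = 0 and n_k < m_k < n_{k+1}),
I_k = [n_k, n_{k+1}), and φ(k) ⊆ 2^{I_k} satisfies |φ(k)|/2^{|I_k|} < 4^{−(k+1)}
(similarly φ'(k) ⊆ 2^{I'_k} with I'_k = [m_k, m_{k+1})). Define
S_k := {s ∈ 2^{[n_k,m_k)} : s has at least 2^{n_{k+1}−m_k−k} extensions inside φ(k)}.
Then |S_k|/2^{m_k − n_k} < 1/2^{k+2} for all k. -/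
theorem two_small_coding_S_bound
    (n m : ℕ → ℕ) (hn0 : n 0 = 0)
    (hnm : ∀ k, n k < m k) (hmn : ∀ k, m k < n (k + 1))
    (φ : ∀ k, Finset ((i : Set.Ico (n k) (n (k + 1))) → Bool))
    (φ' : ∀ k, Finset ((i : Set.Ico (m k) (m (k + 1))) → Bool))
    (hφ : ∀ k, ((φ k).card : ℝ) / 2 ^ (n (k + 1) - n k) < 1 / 4 ^ (k + 1))
    (hφ' : ∀ k, ((φ' k).card : ℝ) / 2 ^ (m (k + 1) - m k) < 1 / 4 ^ (k + 1))
    (S : ∀ k, Finset ((i : Set.Ico (n k) (m k)) → Bool))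
    (hS : ∀ k (s : (i : Set.Ico (n k) (m k)) → Bool),
      s ∈ S k ↔ 2 ^ (n (k + 1) - m k - k) ≤
        ((φ k).filter (fun t => ∀ i : Set.Ico (n k) (m k),
          t ⟨i.1, ⟨i.2.1, i.2.2.trans (hmn k)⟩⟩ = s i)).card) :
    ∀ k, ((S k).card : ℝ) / 2 ^ (m k - n k) < 1 / 2 ^ (k + 2) := by
  intro k
  set e := n (k + 1) - m k - k with he
  set d := m k - n k with hd
  set D := n (k + 1) - n k with hD
  set f : ((i : Set.Ico (n k) (m k)) → Bool) →
      Finset ((i : Set.Ico (n k) (n (k + 1))) → Bool) :=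
    fun s => (φ k).filter (fun t => ∀ i : Set.Ico (n k) (m k),
      t ⟨i.1, ⟨i.2.1, i.2.2.trans (hmn k)⟩⟩ = s i) with hf
  -- pairwise disjointness of fibers
  have hdisj : ∀ s ∈ S k, ∀ s' ∈ S k, s ≠ s' → Disjoint (f s) (f s') := by
    intro s _ s' _ hne
    rw [Finset.disjoint_left]
    intro t ht ht'
    rw [hf, Finset.mem_filter] at ht ht'
    apply hne
    funext i
    rw [← ht.2 i, ht'.2 i]
  -- key counting inequality
  have hcard : (S k).card * 2 ^ e ≤ (φ k).card := by
    calc (S k).card * 2 ^ e = ∑ _s ∈ S k, 2 ^ e := by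
          rw [Finset.sum_const, smul_eq_mul]
      _ ≤ ∑ s ∈ S k, (f s).card := Finset.sum_le_sum fun s hs => (hS k s).1 hs
      _ = ((S k).biUnion f).card := (Finset.card_biUnion hdisj).symm
      _ ≤ (φ k).card := Finset.card_le_card (by
          intro t ht
          rw [Finset.mem_biUnion] at ht
          obtain ⟨s, _, hts⟩ := ht
          exact (Finset.mem_filter.mp hts).1)
  have hcardR : ((S k).card : ℝ) * 2 ^ e ≤ (φ k).card := by exact_mod_cast hcard
  have hφk : ((φ k).card : ℝ) * 4 ^ (k + 1) < 2 ^ D := by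
    have h := hφ k
    rw [div_lt_div_iff₀ (by positivity) (by positivity)] at h
    linarith
  have hDle : D ≤ d + e + k := by
    have h1 := hnm k
    have h2 := hmn k
    omega
  have hpow : (2 : ℝ) ^ D ≤ 2 ^ (d + e + k) :=
    pow_le_pow_right₀ (by norm_num) hDle
  have h4 : (4 : ℝ) ^ (k + 1) = 2 ^ k * 2 ^ (k + 2) := by
    rw [show (4 : ℝ) = 2 ^ 2 by norm_num, ← pow_mul, ← pow_add]
    congr 1
    ring
  have key : ((S k).card : ℝ) * 2 ^ e * 4 ^ (k + 1) < 2 ^ (d + e + k) := by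
    calc ((S k).card : ℝ) * 2 ^ e * 4 ^ (k + 1)
        ≤ ((φ k).card : ℝ) * 4 ^ (k + 1) :=
          mul_le_mul_of_nonneg_right hcardR (by positivity)
      _ < 2 ^ D := hφk
      _ ≤ 2 ^ (d + e + k) := hpow
  rw [div_lt_div_iff₀ (by positivity) (by positivity), one_mul]
  have hc : (0 : ℝ) < 2 ^ e * 2 ^ k := by positivity
  refine lt_of_mul_lt_mul_right ?_ hc.le
  calc ((S k).card : ℝ) * 2 ^ (k + 2) * (2 ^ e * 2 ^ k)
      = ((S k).card : ℝ) * 2 ^ e * 4 ^ (k + 1) := by rw [h4]; ring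
    _ < 2 ^ (d + e + k) := key
    _ = 2 ^ d * (2 ^ e * 2 ^ k) := by rw [pow_add, pow_add, mul_assoc]
end

section
/- Let b₀, b₁ : ℕ → ℕ be strictly increasing with b₀(n) ≥ n, and let b₁*(n) be defined by b₁*(0) = 0, b₁*(n+1) = b₁(b₁*(n)+1); set I_n := [b₀(n), b₀(n+1)) and I*_n := [b₁*(n), b₁*(n+1)). If b₀(n) ≤ b₁(n) for all but finitely many n, then for all but finitely many n there exists m ≥ n with I_m ⊆ I*_n. -/
open Filter

/-- Let b₀, b₁ : ℕ → ℕ be strictly increasing with b₀(n) ≥ n, and let b₁* be the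
speed-up of b₁: b₁*(0) = 0, b₁*(n+1) = b₁(b₁*(n)+1). Set I_m = [b₀(m), b₀(m+1))
and I*_n = [b₁*(n), b₁*(n+1)). If b₀(n) ≤ b₁(n) for all but finitely many n, then
for all but finitely many n there is some m ≥ n with I_m ⊆ I*_n, i.e.
b₁*(n) ≤ b₀(m) and b₀(m+1) ≤ b₁*(n+1). -/
theorem eventually_interval_contained
    (b₀ b₁ : ℕ → ℕ) (hb₀ : StrictMono b₀) (hb₁ : StrictMono b₁)
    (hge : ∀ k, k ≤ b₀ k)
    (b₁s : ℕ → ℕ) (hb₁s0 : b₁s 0 = 0) (hb₁s : ∀ k, b₁s (k + 1) = b₁ (b₁s k + 1))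
    (hle : ∀ᶠ k in atTop, b₀ k ≤ b₁ k) :
    ∀ᶠ n in atTop, ∃ m, n ≤ m ∧ b₁s n ≤ b₀ m ∧ b₀ (m + 1) ≤ b₁s (n + 1) := by
  have hsg : ∀ n, n ≤ b₁s n := by
    intro n
    induction n with
    | zero => omega
    | succ k ih =>
      have : b₁s k + 1 ≤ b₁ (b₁s k + 1) := hb₁.le_apply
      rw [hb₁s k]
      omega
  rw [eventually_atTop] at hle ⊢
  obtain ⟨N, hN⟩ := hle
  refine ⟨N, fun n hn => ⟨b₁s n, (hsg n), le_trans (hge _) le_rfl, ?_⟩⟩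
  rw [hb₁s n]
  exact hN (b₁s n + 1) (by have := hsg n; omega)
end
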